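/- Let u ∈ ℂ((z)) be a formal Laurent series with a pole of order exactly 1 at 0, i.e., the coefficient of z⁻¹ in u is nonzero and the coefficient of zⁿ is zero for all n ≤ −2. Then for every λ ∈ ℂ, the set of ψ ∈ ℂ((z)) satisfying ψ'' + uψ = λψ does not contain two linearly independent elements. -/

import Mathlib

open HahnSeries

/-- The formal derivative of a formal Laurent series `Σₙ aₙ zⁿ ↦ Σₙ n aₙ z^{n−1}`. -/
noncomputable def laurentDeriv (f : LaurentSeries ℂ) : LaurentSeries ℂ where
  coeff n := ((n + 1 : ℤ) : ℂ) * f.coeff (n + 1)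
  isPWO_support' := by
    refine Set.IsPWO.mono (Set.IsPWO.image_of_monotone f.isPWO_support
      (f := fun m : ℤ => m - 1) (fun a b hab => by simpa using hab)) ?_
    intro n hn
    have h1 : f.coeff (n + 1) ≠ 0 := by
      intro h0
      simp only [Function.mem_support, h0, mul_zero, ne_eq, not_true_eq_false] at hn
    exact ⟨n + 1, h1, by ring⟩

lemma laurentDeriv_coeff (f : LaurentSeries ℂ) (n : ℤ) :
    (laurentDeriv f).coeff n = ((n + 1 : ℤ) : ℂ) * f.coeff (n + 1) := rfl

lemma laurentDeriv_smul (c : ℂ) (f : LaurentSeries ℂ) :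
    laurentDeriv (c • f) = c • laurentDeriv f := by
  ext n
  simp only [laurentDeriv_coeff, HahnSeries.coeff_smul, smul_eq_mul]
  ring

lemma laurentDeriv_sub (f g : LaurentSeries ℂ) :
    laurentDeriv (f - g) = laurentDeriv f - laurentDeriv g := by
  ext n
  simp only [laurentDeriv_coeff, HahnSeries.coeff_sub]
  ring

/-- Any nonzero formal Laurent solution has order exactly 1. -/
lemma sol_order (u : LaurentSeries ℂ)
    (h1 : u.coeff (-1 : ℤ) ≠ 0) (h2 : ∀ n : ℤ, n ≤ -2 → u.coeff n = 0)
    (lam : ℂ) (ψ : LaurentSeries ℂ)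
    (heq : laurentDeriv (laurentDeriv ψ) + u * ψ = lam • ψ)
    (hψ : ψ ≠ 0) : ψ.order = 1 := by
  have hu0 : u ≠ 0 := fun h => h1 (by simp [h])
  have huord : u.order = -1 := by
    have hle : u.order ≤ -1 := order_le_of_coeff_ne_zero h1
    have hgt : ¬ u.order ≤ -2 := fun h => (coeff_order_eq_zero.not.mpr hu0) (h2 _ h)
    omega
  set m := ψ.order with hm
  have hψm : ψ.coeff m ≠ 0 := (coeff_order_eq_zero.not.mpr hψ)
  have hmulord : (u * ψ).order = -1 + m := by
    rw [order_mul hu0 hψ, huord]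
  -- coefficient at m - 2
  have key : ((m - 1 : ℤ) : ℂ) * (((m : ℤ) : ℂ) * ψ.coeff m) = 0 := by
    have := congrArg (fun f : LaurentSeries ℂ => f.coeff (m - 2)) heq
    simp only [HahnSeries.coeff_add, laurentDeriv_coeff, HahnSeries.coeff_smul,
      smul_eq_mul] at this
    rw [coeff_eq_zero_of_lt_order (x := u * ψ) (by omega : m - 2 < (u * ψ).order),
      coeff_eq_zero_of_lt_order (x := ψ) (by omega : m - 2 < ψ.order)] at this
    rw [show m - 2 + 1 + 1 = m from by ring] at this
    rw [show m - 2 + 1 = m - 1 from by ring] at this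
    simpa using this
  have hm01 : m = 0 ∨ m = 1 := by
    rcases mul_eq_zero.1 key with h | h
    · right
      have : m - 1 = 0 := Int.cast_injective (by simpa using h)
      omega
    · rcases mul_eq_zero.1 h with h' | h'
      · left
        exact_mod_cast Int.cast_injective (α := ℂ) (by simpa using h')
      · exact absurd h' hψm
  rcases hm01 with h0 | h1'
  · -- exclude m = 0 using coefficient at -1
    exfalso
    have := congrArg (fun f : LaurentSeries ℂ => f.coeff (-1)) heq
    simp only [HahnSeries.coeff_add, laurentDeriv_coeff, HahnSeries.coeff_smul,
      smul_eq_mul] at this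
    have hmul : (u * ψ).coeff (-1) = u.leadingCoeff * ψ.leadingCoeff := by
      have := coeff_mul_order_add_order u ψ
      rwa [huord, ← hm, h0, add_zero] at this
    rw [hmul, coeff_eq_zero_of_lt_order (x := ψ) (by omega : (-1 : ℤ) < ψ.order)] at this
    simp only [neg_add_cancel, Int.cast_zero, zero_mul, zero_add, mul_zero] at this
    exact mul_ne_zero (leadingCoeff_ne_zero.mpr hu0) (leadingCoeff_ne_zero.mpr hψ) this
  · exact h1'

/-- If `u ∈ ℂ((z))` has a pole of order exactly one at `0`, then for no `λ ∈ ℂ` does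
the equation `ψ'' + uψ = λψ` admit two linearly independent formal Laurent series
solutions. -/
theorem no_two_independent_solutions_of_first_order_pole
    (u : LaurentSeries ℂ)
    (h1 : u.coeff (-1 : ℤ) ≠ 0) (h2 : ∀ n : ℤ, n ≤ -2 → u.coeff n = 0) :
    ∀ lam : ℂ, ¬ ∃ ψ₁ ψ₂ : LaurentSeries ℂ,
      laurentDeriv (laurentDeriv ψ₁) + u * ψ₁ = lam • ψ₁ ∧
      laurentDeriv (laurentDeriv ψ₂) + u * ψ₂ = lam • ψ₂ ∧
      LinearIndependent ℂ ![ψ₁, ψ₂] := by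
  rintro lam ⟨ψ₁, ψ₂, e1, e2, hind⟩
  have hne1 : ψ₁ ≠ 0 := by simpa using hind.ne_zero 0
  have hne2 : ψ₂ ≠ 0 := by simpa using hind.ne_zero 1
  have ho1 : ψ₁.order = 1 := sol_order u h1 h2 lam ψ₁ e1 hne1
  have ho2 : ψ₂.order = 1 := sol_order u h1 h2 lam ψ₂ e2 hne2
  set c₁ := ψ₁.coeff 1 with hc₁
  set c₂ := ψ₂.coeff 1 with hc₂
  have hc1ne : c₁ ≠ 0 := by rw [hc₁, ← ho1]; exact (coeff_order_eq_zero.not.mpr hne1)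
  have hc2ne : c₂ ≠ 0 := by rw [hc₂, ← ho2]; exact (coeff_order_eq_zero.not.mpr hne2)
  set φ : LaurentSeries ℂ := c₂ • ψ₁ - c₁ • ψ₂ with hφ
  have hφeq : laurentDeriv (laurentDeriv φ) + u * φ = lam • φ := by
    have hms : ∀ (c : ℂ) (ψ : LaurentSeries ℂ), u * (c • ψ) = c • (u * ψ) := by
      intro c ψ
      rw [← HahnSeries.C_mul_eq_smul, ← HahnSeries.C_mul_eq_smul, mul_left_comm]
    rw [hφ, laurentDeriv_sub, laurentDeriv_smul, laurentDeriv_smul, laurentDeriv_sub,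
      laurentDeriv_smul, laurentDeriv_smul, mul_sub, hms, hms,
      smul_sub, smul_comm lam c₂, smul_comm lam c₁,
      ← e1, ← e2, smul_add, smul_add]
    abel
  have hφ1 : φ.coeff 1 = 0 := by
    simp only [hφ, HahnSeries.coeff_sub, HahnSeries.coeff_smul, smul_eq_mul, ← hc₁, ← hc₂]
    ring
  have hφ0 : φ = 0 := by
    by_contra h
    have := sol_order u h1 h2 lam φ hφeq h
    exact (coeff_order_eq_zero.not.mpr h) (this ▸ hφ1)
  have := (LinearIndependent.pair_iff.1 hind c₂ (-c₁) (by
    rw [neg_smul, ← sub_eq_add_neg, ← hφ, hφ0])).1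
  exact hc2ne this
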